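/- (Fricke–Klein–Vogt) For every element w of the free group F_2 on two generators x and x', there exists a polynomial P ∈ Z[a, b, c] in three variables such that for every group homomorphism ρ : F_2 → SL_2(C), tr(ρ(w)) = P(tr ρ(x), tr ρ(x'), tr ρ(x·x')). -/

import Mathlib

open Matrix

/-- Universal multiplication law in the span of `1, A, B, A*B` for 2×2 matrices. -/
private lemma fkv_key_mul (A B : Matrix (Fin 2) (Fin 2) ℂ)
    (p1 q1 r1 s1 p2 q2 r2 s2 : ℂ) :
    (p1 • 1 + q1 • A + r1 • B + s1 • (A * B)) * (p2 • 1 + q2 • A + r2 • B + s2 • (A * B)) =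
      (p1 * p2 + r1 * q2 * (trace (A * B) - trace A * trace B)
          - A.det * (q1 * q2 + trace B * s1 * q2)
          - B.det * (r1 * r2 + trace A * r1 * s2)
          - A.det * B.det * (s1 * s2)) • (1 : Matrix (Fin 2) (Fin 2) ℂ)
        + (p1 * q2 + q1 * p2 + trace A * q1 * q2 + trace B * r1 * q2 + trace (A * B) * s1 * q2
          + B.det * (r1 * s2 - s1 * r2)) • A
        + (p1 * r2 + r1 * p2 + trace A * r1 * q2 + trace B * r1 * r2 + trace (A * B) * r1 * s2
          + A.det * (s1 * q2 - q1 * s2)) • B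
        + (p1 * s2 + s1 * p2 + q1 * r2 + trace A * q1 * s2 - r1 * q2 + trace B * s1 * r2
          + trace (A * B) * s1 * s2) • (A * B) := by
  ext i j
  fin_cases i <;> fin_cases j <;>
    simp [Matrix.mul_apply, Fin.sum_univ_two, Matrix.trace_fin_two, Matrix.det_fin_two,
      Matrix.one_apply] <;>
    ring

/-- Inverse in `SL₂` via the trace. -/
private lemma fkv_key_inv (M : Matrix.SpecialLinearGroup (Fin 2) ℂ) :
    ((M⁻¹ : Matrix.SpecialLinearGroup (Fin 2) ℂ) : Matrix (Fin 2) (Fin 2) ℂ) =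
      trace (M : Matrix (Fin 2) (Fin 2) ℂ) • (1 : Matrix (Fin 2) (Fin 2) ℂ)
        - (M : Matrix (Fin 2) (Fin 2) ℂ) := by
  rw [Matrix.SpecialLinearGroup.coe_inv, Matrix.adjugate_fin_two]
  ext i j
  fin_cases i <;> fin_cases j <;>
    simp [Matrix.trace_fin_two, Matrix.one_apply]

/-- Fricke–Klein–Vogt: for every word `w` in the free group on two generators there is an
integer polynomial `P` in three variables such that for every representation
`ρ : F₂ → SL₂(ℂ)`, `tr(ρ(w)) = P(tr ρ(x), tr ρ(x'), tr ρ(x·x'))`. -/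
theorem fricke_klein_vogt (w : FreeGroup (Fin 2)) :
    ∃ P : MvPolynomial (Fin 3) ℤ,
      ∀ ρ : FreeGroup (Fin 2) →* Matrix.SpecialLinearGroup (Fin 2) ℂ,
        Matrix.trace ((ρ w : Matrix.SpecialLinearGroup (Fin 2) ℂ) :
            Matrix (Fin 2) (Fin 2) ℂ) =
          MvPolynomial.aeval
            ![Matrix.trace ((ρ (FreeGroup.of 0) : Matrix.SpecialLinearGroup (Fin 2) ℂ) :
                Matrix (Fin 2) (Fin 2) ℂ),
              Matrix.trace ((ρ (FreeGroup.of 1) : Matrix.SpecialLinearGroup (Fin 2) ℂ) :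
                Matrix (Fin 2) (Fin 2) ℂ),
              Matrix.trace ((ρ (FreeGroup.of 0 * FreeGroup.of 1) :
                Matrix.SpecialLinearGroup (Fin 2) ℂ) : Matrix (Fin 2) (Fin 2) ℂ)] P := by
  classical
  have hC : ∀ ρ : FreeGroup (Fin 2) →* Matrix.SpecialLinearGroup (Fin 2) ℂ,
      Matrix.trace ((ρ (FreeGroup.of 0 * FreeGroup.of 1) :
          Matrix.SpecialLinearGroup (Fin 2) ℂ) : Matrix (Fin 2) (Fin 2) ℂ) =
        Matrix.trace (((ρ (FreeGroup.of 0) : Matrix.SpecialLinearGroup (Fin 2) ℂ) :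
            Matrix (Fin 2) (Fin 2) ℂ) *
          ((ρ (FreeGroup.of 1) : Matrix.SpecialLinearGroup (Fin 2) ℂ) :
            Matrix (Fin 2) (Fin 2) ℂ)) := by
    intro ρ
    rw [_root_.map_mul, Matrix.SpecialLinearGroup.coe_mul]
  have core : ∃ p q r s : MvPolynomial (Fin 3) ℤ,
      ∀ ρ : FreeGroup (Fin 2) →* Matrix.SpecialLinearGroup (Fin 2) ℂ,
        ((ρ w : Matrix.SpecialLinearGroup (Fin 2) ℂ) : Matrix (Fin 2) (Fin 2) ℂ) =
          MvPolynomial.aeval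
            ![Matrix.trace ((ρ (FreeGroup.of 0) : Matrix.SpecialLinearGroup (Fin 2) ℂ) :
                Matrix (Fin 2) (Fin 2) ℂ),
              Matrix.trace ((ρ (FreeGroup.of 1) : Matrix.SpecialLinearGroup (Fin 2) ℂ) :
                Matrix (Fin 2) (Fin 2) ℂ),
              Matrix.trace ((ρ (FreeGroup.of 0 * FreeGroup.of 1) :
                Matrix.SpecialLinearGroup (Fin 2) ℂ) : Matrix (Fin 2) (Fin 2) ℂ)] p
            • (1 : Matrix (Fin 2) (Fin 2) ℂ)
          + MvPolynomial.aeval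
            ![Matrix.trace ((ρ (FreeGroup.of 0) : Matrix.SpecialLinearGroup (Fin 2) ℂ) :
                Matrix (Fin 2) (Fin 2) ℂ),
              Matrix.trace ((ρ (FreeGroup.of 1) : Matrix.SpecialLinearGroup (Fin 2) ℂ) :
                Matrix (Fin 2) (Fin 2) ℂ),
              Matrix.trace ((ρ (FreeGroup.of 0 * FreeGroup.of 1) :
                Matrix.SpecialLinearGroup (Fin 2) ℂ) : Matrix (Fin 2) (Fin 2) ℂ)] q
            • ((ρ (FreeGroup.of 0) : Matrix.SpecialLinearGroup (Fin 2) ℂ) :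
              Matrix (Fin 2) (Fin 2) ℂ)
          + MvPolynomial.aeval
            ![Matrix.trace ((ρ (FreeGroup.of 0) : Matrix.SpecialLinearGroup (Fin 2) ℂ) :
                Matrix (Fin 2) (Fin 2) ℂ),
              Matrix.trace ((ρ (FreeGroup.of 1) : Matrix.SpecialLinearGroup (Fin 2) ℂ) :
                Matrix (Fin 2) (Fin 2) ℂ),
              Matrix.trace ((ρ (FreeGroup.of 0 * FreeGroup.of 1) :
                Matrix.SpecialLinearGroup (Fin 2) ℂ) : Matrix (Fin 2) (Fin 2) ℂ)] r
            • ((ρ (FreeGroup.of 1) : Matrix.SpecialLinearGroup (Fin 2) ℂ) :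
              Matrix (Fin 2) (Fin 2) ℂ)
          + MvPolynomial.aeval
            ![Matrix.trace ((ρ (FreeGroup.of 0) : Matrix.SpecialLinearGroup (Fin 2) ℂ) :
                Matrix (Fin 2) (Fin 2) ℂ),
              Matrix.trace ((ρ (FreeGroup.of 1) : Matrix.SpecialLinearGroup (Fin 2) ℂ) :
                Matrix (Fin 2) (Fin 2) ℂ),
              Matrix.trace ((ρ (FreeGroup.of 0 * FreeGroup.of 1) :
                Matrix.SpecialLinearGroup (Fin 2) ℂ) : Matrix (Fin 2) (Fin 2) ℂ)] s
            • (((ρ (FreeGroup.of 0) : Matrix.SpecialLinearGroup (Fin 2) ℂ) :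
                Matrix (Fin 2) (Fin 2) ℂ) *
              ((ρ (FreeGroup.of 1) : Matrix.SpecialLinearGroup (Fin 2) ℂ) :
                Matrix (Fin 2) (Fin 2) ℂ)) := by
    induction w using FreeGroup.induction_on with
    | C1 =>
      refine ⟨1, 0, 0, 0, fun ρ => ?_⟩
      simp
    | of i =>
      fin_cases i
      · refine ⟨0, 1, 0, 0, fun ρ => ?_⟩
        show ((ρ (FreeGroup.of 0) : Matrix.SpecialLinearGroup (Fin 2) ℂ) :
          Matrix (Fin 2) (Fin 2) ℂ) = _
        simp
      · refine ⟨0, 0, 1, 0, fun ρ => ?_⟩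
        show ((ρ (FreeGroup.of 1) : Matrix.SpecialLinearGroup (Fin 2) ℂ) :
          Matrix (Fin 2) (Fin 2) ℂ) = _
        simp
    | inv_of i _ =>
      fin_cases i
      · refine ⟨MvPolynomial.X 0, -1, 0, 0, fun ρ => ?_⟩
        show ((ρ (FreeGroup.of 0)⁻¹ : Matrix.SpecialLinearGroup (Fin 2) ℂ) :
          Matrix (Fin 2) (Fin 2) ℂ) = _
        rw [map_inv, fkv_key_inv]
        simp
        abel
      · refine ⟨MvPolynomial.X 1, 0, -1, 0, fun ρ => ?_⟩
        show ((ρ (FreeGroup.of 1)⁻¹ : Matrix.SpecialLinearGroup (Fin 2) ℂ) :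
          Matrix (Fin 2) (Fin 2) ℂ) = _
        rw [map_inv, fkv_key_inv]
        simp
        abel
    | mul w1 w2 ih1 ih2 =>
      obtain ⟨p1, q1, r1, s1, h1⟩ := ih1
      obtain ⟨p2, q2, r2, s2, h2⟩ := ih2
      refine ⟨p1 * p2 + r1 * q2 * (MvPolynomial.X 2 - MvPolynomial.X 0 * MvPolynomial.X 1)
            - (q1 * q2 + MvPolynomial.X 1 * s1 * q2)
            - (r1 * r2 + MvPolynomial.X 0 * r1 * s2) - s1 * s2,
          p1 * q2 + q1 * p2 + MvPolynomial.X 0 * q1 * q2 + MvPolynomial.X 1 * r1 * q2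
            + MvPolynomial.X 2 * s1 * q2 + (r1 * s2 - s1 * r2),
          p1 * r2 + r1 * p2 + MvPolynomial.X 0 * r1 * q2 + MvPolynomial.X 1 * r1 * r2
            + MvPolynomial.X 2 * r1 * s2 + (s1 * q2 - q1 * s2),
          p1 * s2 + s1 * p2 + q1 * r2 + MvPolynomial.X 0 * q1 * s2 - r1 * q2
            + MvPolynomial.X 1 * s1 * r2 + MvPolynomial.X 2 * s1 * s2,
          fun ρ => ?_⟩
      have hdA : ((ρ (FreeGroup.of 0) : Matrix.SpecialLinearGroup (Fin 2) ℂ) :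
          Matrix (Fin 2) (Fin 2) ℂ).det = 1 := (ρ (FreeGroup.of 0)).2
      have hdB : ((ρ (FreeGroup.of 1) : Matrix.SpecialLinearGroup (Fin 2) ℂ) :
          Matrix (Fin 2) (Fin 2) ℂ).det = 1 := (ρ (FreeGroup.of 1)).2
      show ((ρ (w1 * w2) : Matrix.SpecialLinearGroup (Fin 2) ℂ) :
          Matrix (Fin 2) (Fin 2) ℂ) = _
      rw [_root_.map_mul, Matrix.SpecialLinearGroup.coe_mul, h1 ρ, h2 ρ, fkv_key_mul,
        hdA, hdB]
      simp only [map_add, map_sub, _root_.map_mul, MvPolynomial.aeval_X,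
        Matrix.cons_val_zero, Matrix.cons_val_one, Matrix.cons_val_two,
        Matrix.head_cons, Matrix.tail_cons, Matrix.SpecialLinearGroup.coe_mul, hC ρ]
      match_scalars <;> ring
  obtain ⟨p, q, r, s, hc⟩ := core
  refine ⟨MvPolynomial.C 2 * p + MvPolynomial.X 0 * q + MvPolynomial.X 1 * r
      + MvPolynomial.X 2 * s, fun ρ => ?_⟩
  rw [hc ρ]
  simp only [map_add, _root_.map_mul, MvPolynomial.aeval_X, MvPolynomial.aeval_C,
    Matrix.trace_add, Matrix.trace_smul, Matrix.trace_one,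
    Matrix.cons_val_zero, Matrix.cons_val_one, Matrix.cons_val_two,
    Matrix.head_cons, Matrix.tail_cons, Matrix.SpecialLinearGroup.coe_mul, hC ρ, smul_eq_mul]
  norm_num [Fintype.card_fin]
  ring
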